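/- Define Λ_1 = 2 and for each n let Λ_{n+1} = Λ_n^{1-η_n} where η_n ∈ (0,1) is the unique solution of Λ_n^{1-η} = 30^η / (η^η (1-η)^{1-η}). Then the sequence (Λ_n) is strictly decreasing, bounded below by 1, and converges to 1. -/

import Mathlib

open Filter

private lemma aux_neg_mul_log_le (t : ℝ) (ht0 : 0 < t) (ht1 : t < 1) :
    -(t * Real.log t) ≤ 2 * Real.sqrt t := by
  have hst : 0 < Real.sqrt t := Real.sqrt_pos.2 ht0
  have hlog : Real.log t = 2 * Real.log (Real.sqrt t) := by
    rw [Real.log_sqrt ht0.le]; ring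
  have h1 : Real.log (Real.sqrt t)⁻¹ ≤ (Real.sqrt t)⁻¹ - 1 :=
    Real.log_le_sub_one_of_pos (by positivity)
  rw [Real.log_inv] at h1
  have h2 : -Real.log t ≤ 2 * (Real.sqrt t)⁻¹ := by
    rw [hlog]; nlinarith
  have h3 : t * (-Real.log t) ≤ t * (2 * (Real.sqrt t)⁻¹) :=
    mul_le_mul_of_nonneg_left h2 ht0.le
  have h4 : t * (2 * (Real.sqrt t)⁻¹) = 2 * Real.sqrt t := by
    have hts : Real.sqrt t * Real.sqrt t = t := Real.mul_self_sqrt ht0.le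
    field_simp
    nlinarith [hts]
  nlinarith [h3, h4]

private lemma aux_neg_mul_log_one_sub_le (t : ℝ) (ht0 : 0 < t) (ht1 : t < 1) :
    -((1 - t) * Real.log (1 - t)) ≤ t := by
  have hs : 0 < 1 - t := by linarith
  have h1 : Real.log (1 - t)⁻¹ ≤ (1 - t)⁻¹ - 1 :=
    Real.log_le_sub_one_of_pos (by positivity)
  rw [Real.log_inv] at h1
  have h2 : (1 - t) * (-Real.log (1 - t)) ≤ (1 - t) * ((1 - t)⁻¹ - 1) :=
    mul_le_mul_of_nonneg_left h1 hs.le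
  have h3 : (1 - t) * ((1 - t)⁻¹ - 1) = t := by field_simp; ring
  nlinarith [h2, h3]

/-- The recursively defined sequence `Λ_{n+1} = Λ_n^{1-η_n}` (with `Λ_0 = 2` and `η_n` the
unique solution of `Λ_n^{1-η} = 30^η/(η^η (1-η)^{1-η})` in `(0,1)`) is strictly decreasing,
bounded below by `1`, and converges to `1`. -/
theorem Lambda_sequence_tendsto_one (Λ η : ℕ → ℝ)
    (h0 : Λ 0 = 2)
    (hη : ∀ n, η n ∈ Set.Ioo (0 : ℝ) 1)
    (heq : ∀ n, Λ n ^ (1 - η n) = (30 : ℝ) ^ η n / (η n ^ η n * (1 - η n) ^ (1 - η n)))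
    (hrec : ∀ n, Λ (n + 1) = Λ n ^ (1 - η n)) :
    StrictAnti Λ ∧ (∀ n, 1 ≤ Λ n) ∧ Tendsto Λ atTop (nhds 1) := by
  have hη0 : ∀ n, 0 < η n := fun n => (hη n).1
  have hη1 : ∀ n, η n < 1 := fun n => (hη n).2
  have hgt : ∀ n, 1 < Λ n := by
    intro n
    induction n with
    | zero => rw [h0]; norm_num
    | succ n ih =>
      rw [hrec n]
      exact (Real.one_lt_rpow_iff_of_pos (by linarith)).2 (Or.inl ⟨ih, by linarith [hη1 n]⟩)
  have hpos : ∀ n, 0 < Λ n := fun n => lt_trans one_pos (hgt n)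
  have hanti : StrictAnti Λ := by
    apply strictAnti_nat_of_succ_lt
    intro n
    calc Λ (n + 1) = Λ n ^ (1 - η n) := hrec n
      _ < Λ n ^ (1 : ℝ) :=
        Real.rpow_lt_rpow_of_exponent_lt (hgt n) (by linarith [hη0 n])
      _ = Λ n := Real.rpow_one _
  have hbdd : BddBelow (Set.range Λ) := ⟨1, by rintro x ⟨n, rfl⟩; exact (hgt n).le⟩
  have hL : Tendsto Λ atTop (nhds (⨅ n, Λ n)) := tendsto_atTop_ciInf hanti.antitone hbdd
  set L := ⨅ n, Λ n with hLdef
  have hL1 : 1 ≤ L := le_ciInf fun n => (hgt n).le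
  have hLeq : L = 1 := by
    by_contra hne
    have hLgt : 1 < L := lt_of_le_of_ne hL1 (Ne.symm hne)
    have hlogLpos : 0 < Real.log L := Real.log_pos hLgt
    have hx : Tendsto (fun n => Real.log (Λ n)) atTop (nhds (Real.log L)) :=
      (Real.continuousAt_log (by positivity)).tendsto.comp hL
    have hxsucc : Tendsto (fun n => Real.log (Λ (n + 1))) atTop (nhds (Real.log L)) :=
      hx.comp (tendsto_add_atTop_nat 1)
    have hrel : ∀ n, Real.log (Λ (n + 1)) = (1 - η n) * Real.log (Λ n) := by
      intro n; rw [hrec n, Real.log_rpow (hpos n)]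
    -- η tends to 0
    have hηlim : Tendsto η atTop (nhds 0) := by
      have hdiv : Tendsto (fun n => Real.log (Λ (n + 1)) / Real.log (Λ n)) atTop
          (nhds (Real.log L / Real.log L)) := hxsucc.div hx hlogLpos.ne'
      rw [div_self hlogLpos.ne'] at hdiv
      have heta : ∀ n, η n = 1 - Real.log (Λ (n + 1)) / Real.log (Λ n) := by
        intro n
        have hl : Real.log (Λ n) ≠ 0 := (Real.log_pos (hgt n)).ne'
        rw [hrel n]
        field_simp
        ring
      have : Tendsto (fun n => 1 - Real.log (Λ (n + 1)) / Real.log (Λ n)) atTop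
          (nhds (1 - 1)) := tendsto_const_nhds.sub hdiv
      simpa [← heta] using this
    -- upper bound on log Λ (n+1)
    have hub : ∀ n, Real.log (Λ (n + 1)) ≤
        η n * Real.log 30 + 2 * Real.sqrt (η n) + η n := by
      intro n
      have h30 : (0:ℝ) < (30:ℝ) ^ η n := Real.rpow_pos_of_pos (by norm_num) _
      have hd1 : (0:ℝ) < η n ^ η n := Real.rpow_pos_of_pos (hη0 n) _
      have hd2 : (0:ℝ) < (1 - η n) ^ (1 - η n) :=
        Real.rpow_pos_of_pos (by linarith [hη1 n]) _
      have hlogeq : Real.log (Λ (n + 1)) =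
          η n * Real.log 30 - (η n * Real.log (η n) + (1 - η n) * Real.log (1 - η n)) := by
        rw [hrec n, heq n, Real.log_div h30.ne' (mul_pos hd1 hd2).ne',
          Real.log_mul hd1.ne' hd2.ne', Real.log_rpow (by norm_num : (0:ℝ) < 30),
          Real.log_rpow (hη0 n), Real.log_rpow (by linarith [hη1 n] : (0:ℝ) < 1 - η n)]
      rw [hlogeq]
      have hA := aux_neg_mul_log_le (η n) (hη0 n) (hη1 n)
      have hB := aux_neg_mul_log_one_sub_le (η n) (hη0 n) (hη1 n)
      linarith
    have hg : Tendsto (fun n => η n * Real.log 30 + 2 * Real.sqrt (η n) + η n) atTop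
        (nhds 0) := by
      have hc : Continuous fun t : ℝ => t * Real.log 30 + 2 * Real.sqrt t + t := by
        continuity
      have := (hc.tendsto 0).comp hηlim
      simpa [Function.comp_def] using this
    have hzero : Tendsto (fun n => Real.log (Λ (n + 1))) atTop (nhds 0) :=
      tendsto_of_tendsto_of_tendsto_of_le_of_le tendsto_const_nhds hg
        (fun n => Real.log_nonneg (hgt _).le) hub
    exact hlogLpos.ne' (tendsto_nhds_unique hxsucc hzero)
  exact ⟨hanti, fun n => (hgt n).le, hLeq ▸ hL⟩
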